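/- Every 2-connected graph whose edge set can be covered by 2 isometric subtrees has treewidth at most 2; consequently (using the block decomposition of treewidth) every graph edge-coverable by 2 isometric trees has treewidth at most 2. -/

import Mathlib

open SimpleGraph

namespace TwoTrees

def PGraph (par : ℕ → ℕ) : SimpleGraph ℕ := SimpleGraph.fromRel (fun a b => a ≠ 0 ∧ par a = b)

lemma pgraph_adj (par : ℕ → ℕ) {a b : ℕ} :
    (PGraph par).Adj a b ↔ a ≠ b ∧ ((a ≠ 0 ∧ par a = b) ∨ (b ≠ 0 ∧ par b = a)) := by
  simp [PGraph, fromRel_adj]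

section
variable {par rk : ℕ → ℕ}

lemma par_ne (hrk : ∀ x, x ≠ 0 → rk (par x) < rk x) {x : ℕ} (hx : x ≠ 0) : par x ≠ x :=
  fun h => absurd (hrk x hx) (by rw [h]; omega)

lemma adj_par (hrk : ∀ x, x ≠ 0 → rk (par x) < rk x) {x : ℕ} (hx : x ≠ 0) :
    (PGraph par).Adj x (par x) := by
  rw [pgraph_adj]
  exact ⟨Ne.symm (par_ne hrk hx), Or.inl ⟨hx, rfl⟩⟩

lemma rk_iterate (hpar0 : par 0 = 0) (hrk : ∀ x, x ≠ 0 → rk (par x) < rk x) (m : ℕ) (y : ℕ) :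
    rk (par^[m] y) ≤ rk y := by
  induction m with
  | zero => simp
  | succ k ih =>
    rw [Function.iterate_succ_apply']
    by_cases h : par^[k] y = 0
    · rw [h, hpar0, ← h]; exact ih
    · exact le_of_lt (lt_of_lt_of_le (hrk _ h) ih)

lemma not_iterate_par_eq (hpar0 : par 0 = 0) (hrk : ∀ x, x ≠ 0 → rk (par x) < rk x)
    {x : ℕ} (hx : x ≠ 0) (k : ℕ) : par^[k] (par x) ≠ x := by
  intro h
  have h1 : rk (par^[k] (par x)) ≤ rk (par x) := rk_iterate hpar0 hrk k (par x)
  rw [h] at h1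
  exact absurd (hrk x hx) (by omega)

/-- the set of elements below `x` -/
def Below (par : ℕ → ℕ) (x : ℕ) : Set ℕ := {y | ∃ k, par^[k] y = x}

lemma pgraph_connected (hrk : ∀ x, x ≠ 0 → rk (par x) < rk x) : (PGraph par).Connected := by
  have key : ∀ n x, rk x ≤ n → (PGraph par).Reachable x 0 := by
    intro n
    induction n with
    | zero =>
      intro x hx
      by_cases h : x = 0
      · subst h; rfl
      · exact absurd (lt_of_lt_of_le (hrk x h) hx) (by omega)
    | succ n ih =>
      intro x hx
      by_cases h : x = 0
      · subst h; rfl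
      · have h1 : rk (par x) < rk x := hrk x h
        exact ((adj_par hrk h).reachable).trans (ih (par x) (by omega))
  constructor
  intro x y
  exact (key (rk x) x le_rfl).trans (key (rk y) y le_rfl).symm

lemma pgraph_acyclic (hpar0 : par 0 = 0) (hrk : ∀ x, x ≠ 0 → rk (par x) < rk x) :
    (PGraph par).IsAcyclic := by
  rw [isAcyclic_iff_forall_adj_isBridge]
  have hbr : ∀ x : ℕ, x ≠ 0 → (PGraph par).IsBridge s(x, par x) := by
    intro x hx
    rw [isBridge_iff]
    rintro ⟨w⟩
    have inv : ∀ {a b : ℕ} (_ : ((PGraph par) \ fromEdgeSet {s(x, par x)}).Walk a b),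
        a ∈ Below par x → b ∈ Below par x := by
      intro a b p
      induction p with
      | nil => exact id
      | cons hadj p ih =>
        rename_i u v w
        intro hu
        apply ih
        have hne : ¬ s(u,v) = s(x, par x) := by
          intro hs
          exact hadj.2 (by simp [hs, fromEdgeSet_adj, hadj.1.ne])
        have h1 := hadj.1
        rw [pgraph_adj] at h1
        rcases h1.2 with ⟨hu0, hpu⟩ | ⟨hv0, hpv⟩
        · obtain ⟨k, hk⟩ := hu
          cases k with
          | zero =>
            simp only [Function.iterate_zero, id_eq] at hk
            subst hk
            exact absurd (by rw [hpu]) hne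
          | succ k =>
            rw [Function.iterate_succ_apply, hpu] at hk
            exact ⟨k, hk⟩
        · obtain ⟨k, hk⟩ := hu
          refine ⟨k + 1, ?_⟩
          rw [Function.iterate_succ_apply, hpv, hk]
    have hxb : x ∈ Below par x := ⟨0, rfl⟩
    obtain ⟨k, hk⟩ := inv w hxb
    exact not_iterate_par_eq hpar0 hrk hx k hk
  intro v w hadj
  have h1 := hadj
  rw [pgraph_adj] at h1
  rcases h1.2 with ⟨hv0, hp⟩ | ⟨hw0, hp⟩
  · rw [← hp]; exact hbr v hv0
  · rw [Sym2.eq_swap, ← hp]; exact hbr w hw0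

lemma pgraph_isTree (hpar0 : par 0 = 0) (hrk : ∀ x, x ≠ 0 → rk (par x) < rk x) :
    (PGraph par).IsTree :=
  ⟨pgraph_connected hrk, pgraph_acyclic hpar0 hrk⟩

end
end TwoTrees

open SimpleGraph

namespace TwoTrees

variable {W : Type*}

/-- On a shortest walk, distances split additively. -/
lemma dist_split (H : SimpleGraph W) (hc : H.Connected) {a b x : W} (p : H.Walk a b)
    (hp : p.length = H.dist a b) (hx : x ∈ p.support) :
    H.dist a x + H.dist x b = H.dist a b := by
  classical
  have h1 : H.dist a x ≤ (p.takeUntil x hx).length := SimpleGraph.dist_le _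
  have h2 : H.dist x b ≤ (p.dropUntil x hx).length := SimpleGraph.dist_le _
  have h3 : (p.takeUntil x hx).length + (p.dropUntil x hx).length = p.length := by
    rw [← SimpleGraph.Walk.length_append, SimpleGraph.Walk.take_spec]
  have h4 : H.dist a b ≤ H.dist a x + H.dist x b := hc.dist_triangle
  omega

/-- An edge on a shortest walk from `a` joins consecutive distance levels. -/
lemma dist_edge_of_shortest (H : SimpleGraph W) (hc : H.Connected) {a b : W} (p : H.Walk a b)
    (hp : p.length = H.dist a b) {x y : W} (he : s(x,y) ∈ p.edges) :
    H.dist a x + 1 = H.dist a y ∨ H.dist a y + 1 = H.dist a x := by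
  induction p with
  | nil => simp at he
  | cons hadj q ih =>
    rename_i u c d
    have hq : q.length = H.dist c d := by
      have h1 : H.dist c d ≤ q.length := SimpleGraph.dist_le _
      have h2 : H.dist u d ≤ 1 + H.dist c d := by
        calc H.dist u d ≤ H.dist u c + H.dist c d := hc.dist_triangle
        _ ≤ 1 + H.dist c d := by
            have : H.dist u c ≤ 1 := by
              have := SimpleGraph.dist_le hadj.toWalk
              simpa using this
            omega
      have h3 : (SimpleGraph.Walk.cons hadj q).length = q.length + 1 := by simp
      omega
    have huc : H.dist u c = 1 := by
      have h1 : H.dist u c ≤ 1 := by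
        have := SimpleGraph.dist_le hadj.toWalk
        simpa using this
      have h2 : H.dist u c ≠ 0 := by
        intro h0
        have : u = c := hc.dist_eq_zero_iff.mp h0
        subst this
        have h3 : (SimpleGraph.Walk.cons hadj q).length = q.length + 1 := by simp
        omega
      omega
    have hlift : ∀ z, z ∈ q.support → H.dist u z = 1 + H.dist c z := by
      intro z hz
      have e1 : H.dist u z + H.dist z d = H.dist u d :=
        dist_split H hc _ hp (by simp [hz])
      have e2 : H.dist c z + H.dist z d = H.dist c d :=
        dist_split H hc q hq hz
      have h3 : (SimpleGraph.Walk.cons hadj q).length = q.length + 1 := by simp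
      omega
    rw [SimpleGraph.Walk.edges_cons, List.mem_cons] at he
    rcases he with he | he
    · rcases Sym2.eq_iff.mp he with ⟨rfl, rfl⟩ | ⟨rfl, rfl⟩
      · left
        rw [SimpleGraph.dist_self]
        omega
      · right
        rw [SimpleGraph.dist_self]
        omega
    · have hx := SimpleGraph.Walk.fst_mem_support_of_mem_edges q he
      have hy := SimpleGraph.Walk.snd_mem_support_of_mem_edges q he
      have := ih hq he
      rw [hlift x hx, hlift y hy]
      omega

/-- every vertex different from a base has a neighbour strictly closer to the base. -/
lemma exists_closer (H : SimpleGraph W) (hc : H.Connected) {a v : W} (hav : a ≠ v) :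
    ∃ w, H.Adj w v ∧ H.dist a w + 1 = H.dist a v := by
  obtain ⟨p, hp⟩ := hc.exists_walk_length_eq_dist a v
  have hd0 : H.dist a v ≠ 0 := fun h => hav (hc.dist_eq_zero_iff.mp h)
  obtain ⟨w, hadj, q, hcons⟩ := SimpleGraph.Walk.exists_eq_cons_of_ne (Ne.symm hav) p.reverse
  have hlq : q.length + 1 = H.dist a v := by
    have hrl : p.reverse.length = p.length := SimpleGraph.Walk.length_reverse _
    rw [hcons] at hrl
    simp only [SimpleGraph.Walk.length_cons] at hrl
    omega
  have h1 : H.dist a w ≤ q.length := by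
    have := SimpleGraph.dist_le q.reverse
    simpa [SimpleGraph.dist_comm] using this
  have h2 : H.dist a v ≤ H.dist a w + 1 := by
    calc H.dist a v ≤ H.dist a w + H.dist w v := hc.dist_triangle
    _ ≤ H.dist a w + 1 := by
        have := SimpleGraph.dist_le (hadj.symm.toWalk)
        simp only [SimpleGraph.Walk.length_cons, SimpleGraph.Walk.length_nil] at this
        omega
  exact ⟨w, hadj.symm, by omega⟩

/-- in a tree, every edge joins consecutive levels (w.r.t. distance from any root). -/
lemma tree_adj_level (H : SimpleGraph W) (hc : H.Connected) (hac : H.IsAcyclic) (ρ : W)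
    {u v : W} (hadj : H.Adj u v) :
    H.dist ρ u + 1 = H.dist ρ v ∨ H.dist ρ v + 1 = H.dist ρ u := by
  have hbr := (isAcyclic_iff_forall_adj_isBridge.mp hac) hadj
  rw [isBridge_iff_adj_and_forall_walk_mem_edges] at hbr
  obtain ⟨p₁, hp₁⟩ := hc.exists_walk_length_eq_dist ρ u
  obtain ⟨p₂, hp₂⟩ := hc.exists_walk_length_eq_dist ρ v
  have hmem := hbr (p₁.reverse.append p₂)
  rw [SimpleGraph.Walk.edges_append, List.mem_append] at hmem
  rcases hmem with hmem | hmem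
  · rw [SimpleGraph.Walk.edges_reverse, List.mem_reverse] at hmem
    exact dist_edge_of_shortest H hc p₁ hp₁ hmem
  · exact dist_edge_of_shortest H hc p₂ hp₂ hmem

/-- in a tree the parent (neighbour closer to the root) is unique. -/
lemma tree_parent_unique (H : SimpleGraph W) (hc : H.Connected) (hac : H.IsAcyclic) (ρ : W)
    {u u' v : W} (h1 : H.Adj u v) (h2 : H.Adj u' v)
    (hd1 : H.dist ρ u + 1 = H.dist ρ v) (hd2 : H.dist ρ u' + 1 = H.dist ρ v) : u = u' := by
  have hbr := (isAcyclic_iff_forall_adj_isBridge.mp hac) h1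
  rw [isBridge_iff_adj_and_forall_walk_mem_edges] at hbr
  obtain ⟨p₁, hp₁⟩ := hc.exists_walk_length_eq_dist ρ u
  obtain ⟨p₂, hp₂⟩ := hc.exists_walk_length_eq_dist ρ u'
  have hmem := hbr ((p₁.reverse.append p₂).append h2.toWalk)
  rw [SimpleGraph.Walk.edges_append, List.mem_append] at hmem
  rcases hmem with hmem | hmem
  · rw [SimpleGraph.Walk.edges_append, List.mem_append] at hmem
    exfalso
    rcases hmem with hmem | hmem
    · rw [SimpleGraph.Walk.edges_reverse, List.mem_reverse] at hmem
      have hv := SimpleGraph.Walk.snd_mem_support_of_mem_edges p₁ hmem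
      have := dist_split H hc p₁ hp₁ hv
      omega
    · have hv := SimpleGraph.Walk.snd_mem_support_of_mem_edges p₂ hmem
      have := dist_split H hc p₂ hp₂ hv
      omega
  · simp only [SimpleGraph.Walk.edges_cons, SimpleGraph.Walk.edges_nil, List.mem_singleton] at hmem
    exact Sym2.congr_left.mp hmem

open Classical in
/-- the parent function in a rooted tree. -/
noncomputable def tpar (H : SimpleGraph W) (ρ : W) (v : W) : W :=
  if h : ∃ u, H.Adj u v ∧ H.dist ρ u + 1 = H.dist ρ v then h.choose else v

lemma tpar_spec (H : SimpleGraph W) (hc : H.Connected) {ρ v : W} (hv : H.dist ρ v ≠ 0) :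
    H.Adj (tpar H ρ v) v ∧ H.dist ρ (tpar H ρ v) + 1 = H.dist ρ v := by
  classical
  have hne : ρ ≠ v := by rintro rfl; simp [SimpleGraph.dist_self] at hv
  have h : ∃ u, H.Adj u v ∧ H.dist ρ u + 1 = H.dist ρ v := exists_closer H hc hne
  rw [tpar, dif_pos h]
  exact h.choose_spec

lemma tpar_eq (H : SimpleGraph W) (hc : H.Connected) (hac : H.IsAcyclic) (ρ : W)
    {u v : W} (h1 : H.Adj u v) (hd1 : H.dist ρ u + 1 = H.dist ρ v) : tpar H ρ v = u := by
  have hv : H.dist ρ v ≠ 0 := by omega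
  obtain ⟨h2, hd2⟩ := tpar_spec H hc hv
  exact tree_parent_unique H hc hac ρ h2 h1 hd2 hd1

/-- the ancestor of `v` at level `j`. -/
noncomputable def anc (H : SimpleGraph W) (ρ : W) (v : W) (j : ℕ) : W :=
  (tpar H ρ)^[H.dist ρ v - j] v

lemma iterate_tpar_dist (H : SimpleGraph W) (hc : H.Connected) (ρ : W) (v : W) :
    ∀ m, m ≤ H.dist ρ v →
      H.dist ρ ((tpar H ρ)^[m] v) + m = H.dist ρ v ∧ H.dist v ((tpar H ρ)^[m] v) ≤ m := by
  intro m
  induction m with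
  | zero => simp
  | succ k ih =>
    intro hk
    obtain ⟨e1, e2⟩ := ih (by omega)
    set z := (tpar H ρ)^[k] v with hz
    have hz0 : H.dist ρ z ≠ 0 := by omega
    obtain ⟨hadj, hd⟩ := tpar_spec H hc hz0
    rw [Function.iterate_succ_apply', ← hz]
    constructor
    · omega
    · calc H.dist v (tpar H ρ z) ≤ H.dist v z + H.dist z (tpar H ρ z) := hc.dist_triangle
      _ ≤ k + 1 := by
          have : H.dist z (tpar H ρ z) ≤ 1 := by
            have := SimpleGraph.dist_le (hadj.symm.toWalk)
            simpa using this
          omega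

lemma anc_level (H : SimpleGraph W) (hc : H.Connected) (ρ : W) {v : W} {j : ℕ}
    (hj : j ≤ H.dist ρ v) : H.dist ρ (anc H ρ v j) = j := by
  have := (iterate_tpar_dist H hc ρ v (H.dist ρ v - j) (by omega)).1
  rw [anc]; omega

lemma anc_dist (H : SimpleGraph W) (hc : H.Connected) (ρ : W) {v : W} {j : ℕ}
    (hj : j ≤ H.dist ρ v) : H.dist v (anc H ρ v j) + j ≤ H.dist ρ v := by
  have := (iterate_tpar_dist H hc ρ v (H.dist ρ v - j) (by omega)).2
  rw [anc]; omega

lemma anc_top (H : SimpleGraph W) (ρ : W) (v : W) : anc H ρ v (H.dist ρ v) = v := by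
  rw [anc]; simp

lemma tpar_anc (H : SimpleGraph W) (ρ : W) {v : W} {j : ℕ} (hj : j + 1 ≤ H.dist ρ v) :
    tpar H ρ (anc H ρ v (j+1)) = anc H ρ v j := by
  rw [anc, anc]
  have h2 : H.dist ρ v - j = (H.dist ρ v - (j+1)) + 1 := by omega
  rw [h2, Function.iterate_succ_apply']

lemma anc_tpar (H : SimpleGraph W) (hc : H.Connected) (ρ : W) {v : W} {j : ℕ}
    (hv : H.dist ρ v ≠ 0) (hj : j + 1 ≤ H.dist ρ v) :
    anc H ρ (tpar H ρ v) j = anc H ρ v j := by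
  have hd := (tpar_spec H hc hv).2
  rw [anc, anc]
  have h2 : H.dist ρ v - j = (H.dist ρ (tpar H ρ v) - j) + 1 := by omega
  rw [h2, Function.iterate_succ_apply]

/-- t6 : a vertex metrically "above" `v` is an ancestor of `v`. -/
lemma anc_of_dist_le (H : SimpleGraph W) (hc : H.Connected) (hac : H.IsAcyclic) (ρ : W) :
    ∀ d {u v : W}, H.dist u v = d → H.dist u v + H.dist ρ u ≤ H.dist ρ v →
      anc H ρ v (H.dist ρ u) = u := by
  intro d
  induction d using Nat.strong_induction_on with
  | _ d ih =>
    intro u v hd hle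
    rcases Nat.eq_zero_or_pos d with rfl | hdpos
    · have : u = v := hc.dist_eq_zero_iff.mp hd
      subst this
      exact anc_top H ρ u
    · have huv : u ≠ v := by
        intro h; subst h; rw [SimpleGraph.dist_self] at hd; omega
      obtain ⟨w, hadj, hw⟩ := exists_closer H hc huv
      rcases tree_adj_level H hc hac ρ hadj with hlev | hlev
      · have hv0 : H.dist ρ v ≠ 0 := by omega
        have htw : tpar H ρ v = w := tpar_eq H hc hac ρ hadj hlev
        have h1 : anc H ρ v (H.dist ρ u) = anc H ρ w (H.dist ρ u) := by
          rw [← htw]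
          exact (anc_tpar H hc ρ hv0 (by omega)).symm
        rw [h1]
        exact ih (d-1) (by omega) (u := u) (v := w) (show H.dist u w = d-1 by omega)
          (show H.dist u w + H.dist ρ u ≤ H.dist ρ w by omega)
      · exfalso
        have : H.dist ρ w ≤ H.dist ρ u + H.dist u w := hc.dist_triangle
        omega

/-- t7 : meet lemma, close vertices share low ancestors. -/
lemma anc_eq_of_dist (H : SimpleGraph W) (hc : H.Connected) (hac : H.IsAcyclic) (ρ : W) :
    ∀ d {v v' : W} {j : ℕ}, H.dist v v' = d → j ≤ H.dist ρ v → j ≤ H.dist ρ v' →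
      H.dist v v' + 2*j ≤ H.dist ρ v + H.dist ρ v' →
      anc H ρ v j = anc H ρ v' j := by
  intro d
  induction d using Nat.strong_induction_on with
  | _ d ih =>
    intro v v' j hd hj hj' hle
    rcases Nat.eq_zero_or_pos d with rfl | hdpos
    · have : v = v' := hc.dist_eq_zero_iff.mp hd
      rw [this]
    · have hvv : v ≠ v' := by
        intro h; subst h; rw [SimpleGraph.dist_self] at hd; omega
      obtain ⟨w, hadj, hw⟩ := exists_closer H hc hvv
      rcases tree_adj_level H hc hac ρ hadj with hlev | hlev
      · rcases Nat.lt_or_ge j (H.dist ρ v') with hjlt | hjge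
        · have hv0 : H.dist ρ v' ≠ 0 := by omega
          have htw : tpar H ρ v' = w := tpar_eq H hc hac ρ hadj hlev
          have h1 : anc H ρ v' j = anc H ρ w j := by
            rw [← htw]
            exact (anc_tpar H hc ρ hv0 (by omega)).symm
          rw [h1]
          exact ih (d-1) (by omega) (v := v) (v' := w) (j := j)
            (show H.dist v w = d-1 by omega) hj (show j ≤ H.dist ρ w by omega)
            (show H.dist v w + 2*j ≤ H.dist ρ v + H.dist ρ w by omega)
        · have hjeq : j = H.dist ρ v' := by omega
          subst hjeq
          have h6 : anc H ρ v (H.dist ρ v') = v' :=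
            anc_of_dist_le H hc hac ρ (H.dist v' v) (u := v') (v := v) rfl
              (by rw [SimpleGraph.dist_comm] at hd ⊢; omega)
          rw [h6, anc_top]
      · have hw0 : H.dist ρ w ≠ 0 := by omega
        have htw : tpar H ρ w = v' := tpar_eq H hc hac ρ hadj.symm hlev
        have h1 : anc H ρ w j = anc H ρ v' j := by
          rw [← htw]
          exact (anc_tpar H hc ρ (v := w) (j := j) hw0 (show j+1 ≤ H.dist ρ w by omega)).symm
        rw [← h1]
        exact ih (d-1) (by omega) (v := v) (v' := w) (j := j)
          (show H.dist v w = d-1 by omega) hj (show j ≤ H.dist ρ w by omega)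
          (show H.dist v w + 2*j ≤ H.dist ρ v + H.dist ρ w by omega)

end TwoTrees

open SimpleGraph

namespace TwoTrees

universe u

structure Setup (V : Type u) where
  G : SimpleGraph V
  T1 : G.Subgraph
  T2 : G.Subgraph
  ht1 : T1.coe.IsTree
  ht2 : T2.coe.IsTree
  hiso1 : ∀ x y : T1.verts, T1.coe.dist x y = G.dist x y
  hiso2 : ∀ x y : T2.verts, T2.coe.dist x y = G.dist x y
  hcov : ∀ ⦃u v : V⦄, G.Adj u v → T1.Adj u v ∨ T2.Adj u v

namespace Setup

variable {V : Type u} (S : Setup V)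

lemma hc1 : S.T1.coe.Connected := S.ht1.isConnected
lemma hc2 : S.T2.coe.Connected := S.ht2.isConnected
lemma ha1 : S.T1.coe.IsAcyclic := S.ht1.2
lemma ha2 : S.T2.coe.IsAcyclic := S.ht2.2

open Classical in
noncomputable def r1 : V :=
  if h : (S.T1.verts ∩ S.T2.verts).Nonempty then h.choose
  else ↑(Classical.choice S.hc1.nonempty)

open Classical in
noncomputable def r2 : V :=
  if h : (S.T1.verts ∩ S.T2.verts).Nonempty then h.choose
  else ↑(Classical.choice S.hc2.nonempty)

lemma r_eq (h : (S.T1.verts ∩ S.T2.verts).Nonempty) :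
    S.r1 = S.r2 ∧ S.r1 ∈ S.T1.verts ∩ S.T2.verts := by
  rw [r1, r2, dif_pos h, dif_pos h]
  exact ⟨rfl, h.choose_spec⟩

lemma r1_mem : S.r1 ∈ S.T1.verts := by
  rw [r1]
  split
  · rename_i h
    exact h.choose_spec.1
  · exact (Classical.choice S.hc1.nonempty).2

lemma r2_mem : S.r2 ∈ S.T2.verts := by
  rw [r2]
  split
  · rename_i h
    exact h.choose_spec.2
  · exact (Classical.choice S.hc2.nonempty).2

noncomputable def rho1 : S.T1.verts := ⟨S.r1, S.r1_mem⟩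
noncomputable def rho2 : S.T2.verts := ⟨S.r2, S.r2_mem⟩

open Classical in
/-- the layer of a vertex: distance from the root of its tree. -/
noncomputable def lev (v : V) : ℕ :=
  if h : v ∈ S.T1.verts then S.T1.coe.dist S.rho1 ⟨v, h⟩
  else if h : v ∈ S.T2.verts then S.T2.coe.dist S.rho2 ⟨v, h⟩ else 0

lemma lev_eq1 {v : V} (h : v ∈ S.T1.verts) : S.lev v = S.T1.coe.dist S.rho1 ⟨v, h⟩ := by
  rw [lev, dif_pos h]

lemma lev_eq2 {v : V} (h : v ∈ S.T2.verts) : S.lev v = S.T2.coe.dist S.rho2 ⟨v, h⟩ := by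
  by_cases h1 : v ∈ S.T1.verts
  · obtain ⟨hr, hrm⟩ := S.r_eq ⟨v, h1, h⟩
    rw [lev, dif_pos h1, S.hiso1]
    have : S.T2.coe.dist S.rho2 ⟨v, h⟩ = S.G.dist S.r2 v := S.hiso2 _ _
    rw [this]
    show S.G.dist S.r1 v = S.G.dist S.r2 v
    rw [hr]
  · rw [lev, dif_neg h1, dif_pos h]

lemma lev_zero_iff1 {v : V} (h : v ∈ S.T1.verts) : S.lev v = 0 ↔ v = S.r1 := by
  rw [S.lev_eq1 h, S.hc1.dist_eq_zero_iff]
  exact ⟨fun hh => (congrArg Subtype.val hh).symm, fun hh => Subtype.ext hh.symm⟩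

lemma lev_zero_iff2 {v : V} (h : v ∈ S.T2.verts) : S.lev v = 0 ↔ v = S.r2 := by
  rw [S.lev_eq2 h, S.hc2.dist_eq_zero_iff]
  exact ⟨fun hh => (congrArg Subtype.val hh).symm, fun hh => Subtype.ext hh.symm⟩

open Classical in
/-- parent in the first tree. -/
noncomputable def p1 (v : V) : V :=
  if h : v ∈ S.T1.verts then ↑(tpar S.T1.coe S.rho1 ⟨v, h⟩) else v

open Classical in
/-- parent in the second tree. -/
noncomputable def p2 (v : V) : V :=
  if h : v ∈ S.T2.verts then ↑(tpar S.T2.coe S.rho2 ⟨v, h⟩) else v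

lemma p1_spec {v : V} (h : v ∈ S.T1.verts) (h0 : S.lev v ≠ 0) :
    S.T1.Adj (S.p1 v) v ∧ S.p1 v ∈ S.T1.verts ∧ S.lev (S.p1 v) + 1 = S.lev v := by
  have hd : S.T1.coe.dist S.rho1 ⟨v, h⟩ ≠ 0 := by rw [← S.lev_eq1 h]; exact h0
  obtain ⟨hadj, hdist⟩ := tpar_spec S.T1.coe S.hc1 hd
  have hmem : (↑(tpar S.T1.coe S.rho1 ⟨v, h⟩) : V) ∈ S.T1.verts :=
    (tpar S.T1.coe S.rho1 ⟨v, h⟩).2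
  refine ⟨?_, ?_, ?_⟩
  · rw [p1, dif_pos h]
    exact hadj
  · rw [p1, dif_pos h]
    exact hmem
  · rw [p1, dif_pos h, S.lev_eq1 hmem, S.lev_eq1 h]
    simpa using hdist

lemma p2_spec {v : V} (h : v ∈ S.T2.verts) (h0 : S.lev v ≠ 0) :
    S.T2.Adj (S.p2 v) v ∧ S.p2 v ∈ S.T2.verts ∧ S.lev (S.p2 v) + 1 = S.lev v := by
  have hd : S.T2.coe.dist S.rho2 ⟨v, h⟩ ≠ 0 := by rw [← S.lev_eq2 h]; exact h0
  obtain ⟨hadj, hdist⟩ := tpar_spec S.T2.coe S.hc2 hd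
  have hmem : (↑(tpar S.T2.coe S.rho2 ⟨v, h⟩) : V) ∈ S.T2.verts :=
    (tpar S.T2.coe S.rho2 ⟨v, h⟩).2
  refine ⟨?_, ?_, ?_⟩
  · rw [p2, dif_pos h]
    exact hadj
  · rw [p2, dif_pos h]
    exact hmem
  · rw [p2, dif_pos h, S.lev_eq2 hmem, S.lev_eq2 h]
    simpa using hdist

lemma p1_eq {u v : V} (hu : u ∈ S.T1.verts) (hv : v ∈ S.T1.verts)
    (hadj : S.T1.Adj u v) (hlev : S.lev u + 1 = S.lev v) : S.p1 v = u := by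
  rw [p1, dif_pos hv]
  have hadj' : S.T1.coe.Adj ⟨u, hu⟩ ⟨v, hv⟩ := hadj
  have := tpar_eq S.T1.coe S.hc1 S.ha1 S.rho1 hadj'
    (by rw [← S.lev_eq1 hu, ← S.lev_eq1 hv]; exact hlev)
  rw [this]

lemma p2_eq {u v : V} (hu : u ∈ S.T2.verts) (hv : v ∈ S.T2.verts)
    (hadj : S.T2.Adj u v) (hlev : S.lev u + 1 = S.lev v) : S.p2 v = u := by
  rw [p2, dif_pos hv]
  have hadj' : S.T2.coe.Adj ⟨u, hu⟩ ⟨v, hv⟩ := hadj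
  have := tpar_eq S.T2.coe S.hc2 S.ha2 S.rho2 hadj'
    (by rw [← S.lev_eq2 hu, ← S.lev_eq2 hv]; exact hlev)
  rw [this]

lemma adj_lev1 {u v : V} (hadj : S.T1.Adj u v) :
    S.lev u + 1 = S.lev v ∨ S.lev v + 1 = S.lev u := by
  have hu : u ∈ S.T1.verts := S.T1.edge_vert hadj
  have hv : v ∈ S.T1.verts := S.T1.edge_vert hadj.symm
  have hadj' : S.T1.coe.Adj ⟨u, hu⟩ ⟨v, hv⟩ := hadj
  have := tree_adj_level S.T1.coe S.hc1 S.ha1 S.rho1 hadj'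
  rw [← S.lev_eq1 hu, ← S.lev_eq1 hv] at this
  exact this

lemma adj_lev2 {u v : V} (hadj : S.T2.Adj u v) :
    S.lev u + 1 = S.lev v ∨ S.lev v + 1 = S.lev u := by
  have hu : u ∈ S.T2.verts := S.T2.edge_vert hadj
  have hv : v ∈ S.T2.verts := S.T2.edge_vert hadj.symm
  have hadj' : S.T2.coe.Adj ⟨u, hu⟩ ⟨v, hv⟩ := hadj
  have := tree_adj_level S.T2.coe S.hc2 S.ha2 S.rho2 hadj'
  rw [← S.lev_eq2 hu, ← S.lev_eq2 hv] at this
  exact this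

/-- edge classification in tree 1. -/
lemma edge1 {u v : V} (hadj : S.T1.Adj u v) :
    (S.lev u + 1 = S.lev v ∧ S.p1 v = u) ∨ (S.lev v + 1 = S.lev u ∧ S.p1 u = v) := by
  have hu : u ∈ S.T1.verts := S.T1.edge_vert hadj
  have hv : v ∈ S.T1.verts := S.T1.edge_vert hadj.symm
  rcases S.adj_lev1 hadj with h | h
  · exact Or.inl ⟨h, S.p1_eq hu hv hadj h⟩
  · exact Or.inr ⟨h, S.p1_eq hv hu hadj.symm h⟩

lemma edge2 {u v : V} (hadj : S.T2.Adj u v) :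
    (S.lev u + 1 = S.lev v ∧ S.p2 v = u) ∨ (S.lev v + 1 = S.lev u ∧ S.p2 u = v) := by
  have hu : u ∈ S.T2.verts := S.T2.edge_vert hadj
  have hv : v ∈ S.T2.verts := S.T2.edge_vert hadj.symm
  rcases S.adj_lev2 hadj with h | h
  · exact Or.inl ⟨h, S.p2_eq hu hv hadj h⟩
  · exact Or.inr ⟨h, S.p2_eq hv hu hadj.symm h⟩

open Classical in
/-- ancestors. -/
noncomputable def anc1 (v : V) (j : ℕ) : V :=
  if h : v ∈ S.T1.verts then ↑(anc S.T1.coe S.rho1 ⟨v, h⟩ j) else v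

open Classical in
noncomputable def anc2 (v : V) (j : ℕ) : V :=
  if h : v ∈ S.T2.verts then ↑(anc S.T2.coe S.rho2 ⟨v, h⟩ j) else v

lemma anc1_eqd {v : V} (h : v ∈ S.T1.verts) (j : ℕ) :
    S.anc1 v j = ↑(anc S.T1.coe S.rho1 ⟨v, h⟩ j) := dif_pos h

lemma anc2_eqd {v : V} (h : v ∈ S.T2.verts) (j : ℕ) :
    S.anc2 v j = ↑(anc S.T2.coe S.rho2 ⟨v, h⟩ j) := dif_pos h

lemma p1_eqd {v : V} (h : v ∈ S.T1.verts) :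
    S.p1 v = ↑(tpar S.T1.coe S.rho1 ⟨v, h⟩) := dif_pos h

lemma p2_eqd {v : V} (h : v ∈ S.T2.verts) :
    S.p2 v = ↑(tpar S.T2.coe S.rho2 ⟨v, h⟩) := dif_pos h

lemma anc1_mem {v : V} (h : v ∈ S.T1.verts) (j : ℕ) : S.anc1 v j ∈ S.T1.verts := by
  rw [S.anc1_eqd h j]
  exact (anc S.T1.coe S.rho1 ⟨v, h⟩ j).2

lemma anc2_mem {v : V} (h : v ∈ S.T2.verts) (j : ℕ) : S.anc2 v j ∈ S.T2.verts := by
  rw [S.anc2_eqd h j]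
  exact (anc S.T2.coe S.rho2 ⟨v, h⟩ j).2

lemma lev_anc1 {v : V} (h : v ∈ S.T1.verts) {j : ℕ} (hj : j ≤ S.lev v) :
    S.lev (S.anc1 v j) = j := by
  have hm : (↑(anc S.T1.coe S.rho1 ⟨v, h⟩ j) : V) ∈ S.T1.verts :=
    (anc S.T1.coe S.rho1 ⟨v, h⟩ j).2
  rw [S.anc1_eqd h j, S.lev_eq1 hm, Subtype.coe_eta]
  exact anc_level S.T1.coe S.hc1 S.rho1 (by rw [← S.lev_eq1 h]; exact hj)

lemma lev_anc2 {v : V} (h : v ∈ S.T2.verts) {j : ℕ} (hj : j ≤ S.lev v) :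
    S.lev (S.anc2 v j) = j := by
  have hm : (↑(anc S.T2.coe S.rho2 ⟨v, h⟩ j) : V) ∈ S.T2.verts :=
    (anc S.T2.coe S.rho2 ⟨v, h⟩ j).2
  rw [S.anc2_eqd h j, S.lev_eq2 hm, Subtype.coe_eta]
  exact anc_level S.T2.coe S.hc2 S.rho2 (by rw [← S.lev_eq2 h]; exact hj)

lemma anc1_top {v : V} (h : v ∈ S.T1.verts) : S.anc1 v (S.lev v) = v := by
  rw [S.anc1_eqd h, S.lev_eq1 h, anc_top]

lemma anc2_top {v : V} (h : v ∈ S.T2.verts) : S.anc2 v (S.lev v) = v := by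
  rw [S.anc2_eqd h, S.lev_eq2 h, anc_top]

lemma p1_anc1 {v : V} (h : v ∈ S.T1.verts) {j : ℕ} (hj : j + 1 ≤ S.lev v) :
    S.p1 (S.anc1 v (j+1)) = S.anc1 v j := by
  have hm : (↑(anc S.T1.coe S.rho1 ⟨v, h⟩ (j+1)) : V) ∈ S.T1.verts :=
    (anc S.T1.coe S.rho1 ⟨v, h⟩ (j+1)).2
  rw [S.anc1_eqd h (j+1), S.anc1_eqd h j, S.p1_eqd hm]
  congr 1
  rw [Subtype.coe_eta]
  exact tpar_anc S.T1.coe S.rho1 (by rw [← S.lev_eq1 h]; exact hj)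

lemma p2_anc2 {v : V} (h : v ∈ S.T2.verts) {j : ℕ} (hj : j + 1 ≤ S.lev v) :
    S.p2 (S.anc2 v (j+1)) = S.anc2 v j := by
  have hm : (↑(anc S.T2.coe S.rho2 ⟨v, h⟩ (j+1)) : V) ∈ S.T2.verts :=
    (anc S.T2.coe S.rho2 ⟨v, h⟩ (j+1)).2
  rw [S.anc2_eqd h (j+1), S.anc2_eqd h j, S.p2_eqd hm]
  congr 1
  rw [Subtype.coe_eta]
  exact tpar_anc S.T2.coe S.rho2 (by rw [← S.lev_eq2 h]; exact hj)

/-- the coupling relation. -/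
def cpl (x y : V) : Prop :=
  ∃ (v : V) (h1 : v ∈ S.T1.verts) (h2 : v ∈ S.T2.verts) (j : ℕ),
    j ≤ S.lev v ∧ x = S.anc1 v j ∧ y = S.anc2 v j

lemma cpl_mem {x y : V} (h : S.cpl x y) :
    x ∈ S.T1.verts ∧ y ∈ S.T2.verts ∧ S.lev x = S.lev y := by
  obtain ⟨v, h1, h2, j, hj, hx, hy⟩ := h
  subst hx hy
  refine ⟨S.anc1_mem h1 j, S.anc2_mem h2 j, ?_⟩
  rw [S.lev_anc1 h1 hj, S.lev_anc2 h2 hj]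

lemma cpl_lev {x y : V} (h : S.cpl x y) : S.lev x = S.lev y := (S.cpl_mem h).2.2

/-- THE key matching lemma : the coupling relation is a partial matching. -/
lemma cpl_matching1 {x y y' : V} (h : S.cpl x y) (h' : S.cpl x y') : y = y' := by
  obtain ⟨v, hv1, hv2, j, hj, hx, hy⟩ := h
  obtain ⟨v', hv1', hv2', j', hj', hx', hy'⟩ := h'
  -- the two levels agree
  have hjj : j = j' := by
    have e1 : S.lev x = j := hx ▸ S.lev_anc1 hv1 hj
    have e2 : S.lev x = j' := hx' ▸ S.lev_anc1 hv1' hj'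
    omega
  subst hjj
  -- subtype versions
  have hanc : anc S.T1.coe S.rho1 ⟨v, hv1⟩ j = anc S.T1.coe S.rho1 ⟨v', hv1'⟩ j := by
    have e1 : (↑(anc S.T1.coe S.rho1 ⟨v, hv1⟩ j) : V) = x := (hx.trans (S.anc1_eqd hv1 j)).symm
    have e2 : (↑(anc S.T1.coe S.rho1 ⟨v', hv1'⟩ j) : V) = x := (hx'.trans (S.anc1_eqd hv1' j)).symm
    exact Subtype.ext (e1.trans e2.symm)
  -- distance bound in tree 1
  have hd1 : S.T1.coe.dist ⟨v, hv1⟩ ⟨v', hv1'⟩ + 2*j ≤ S.lev v + S.lev v' := by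
    have b1 : S.T1.coe.dist ⟨v, hv1⟩ (anc S.T1.coe S.rho1 ⟨v, hv1⟩ j) + j ≤ S.lev v := by
      rw [S.lev_eq1 hv1]
      exact anc_dist S.T1.coe S.hc1 S.rho1 (by rw [← S.lev_eq1 hv1]; exact hj)
    have b2 : S.T1.coe.dist ⟨v', hv1'⟩ (anc S.T1.coe S.rho1 ⟨v', hv1'⟩ j) + j ≤ S.lev v' := by
      rw [S.lev_eq1 hv1']
      exact anc_dist S.T1.coe S.hc1 S.rho1 (by rw [← S.lev_eq1 hv1']; exact hj')
    have btr : S.T1.coe.dist ⟨v, hv1⟩ ⟨v', hv1'⟩ ≤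
        S.T1.coe.dist ⟨v, hv1⟩ (anc S.T1.coe S.rho1 ⟨v, hv1⟩ j) +
        S.T1.coe.dist ⟨v', hv1'⟩ (anc S.T1.coe S.rho1 ⟨v', hv1'⟩ j) := by
      rw [hanc]
      calc S.T1.coe.dist ⟨v, hv1⟩ ⟨v', hv1'⟩
          ≤ S.T1.coe.dist ⟨v, hv1⟩ (anc S.T1.coe S.rho1 ⟨v', hv1'⟩ j) +
            S.T1.coe.dist (anc S.T1.coe S.rho1 ⟨v', hv1'⟩ j) ⟨v', hv1'⟩ := S.hc1.dist_triangle
      _ = _ := by rw [SimpleGraph.dist_comm (u := anc S.T1.coe S.rho1 ⟨v', hv1'⟩ j)]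
    omega
  -- transfer to tree 2
  have htrans : S.T2.coe.dist ⟨v, hv2⟩ ⟨v', hv2'⟩ = S.T1.coe.dist ⟨v, hv1⟩ ⟨v', hv1'⟩ := by
    rw [S.hiso1, S.hiso2]
  have hd2 : S.T2.coe.dist ⟨v, hv2⟩ ⟨v', hv2'⟩ + 2*j ≤
      S.T2.coe.dist S.rho2 ⟨v, hv2⟩ + S.T2.coe.dist S.rho2 ⟨v', hv2'⟩ := by
    rw [htrans, ← S.lev_eq2 hv2, ← S.lev_eq2 hv2']
    exact hd1
  have hfin := anc_eq_of_dist S.T2.coe S.hc2 S.ha2 S.rho2 (S.T2.coe.dist ⟨v, hv2⟩ ⟨v', hv2'⟩)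
    rfl (by rw [← S.lev_eq2 hv2]; exact hj) (by rw [← S.lev_eq2 hv2']; exact hj') hd2
  rw [hy, hy', S.anc2_eqd hv2, S.anc2_eqd hv2', hfin]

lemma cpl_matching2 {x x' y : V} (h : S.cpl x y) (h' : S.cpl x' y) : x = x' := by
  obtain ⟨v, hv1, hv2, j, hj, hx, hy⟩ := h
  obtain ⟨v', hv1', hv2', j', hj', hx', hy'⟩ := h'
  have hjj : j = j' := by
    have e1 : S.lev y = j := hy ▸ S.lev_anc2 hv2 hj
    have e2 : S.lev y = j' := hy' ▸ S.lev_anc2 hv2' hj'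
    omega
  subst hjj
  have hanc : anc S.T2.coe S.rho2 ⟨v, hv2⟩ j = anc S.T2.coe S.rho2 ⟨v', hv2'⟩ j := by
    have e1 : (↑(anc S.T2.coe S.rho2 ⟨v, hv2⟩ j) : V) = y := (hy.trans (S.anc2_eqd hv2 j)).symm
    have e2 : (↑(anc S.T2.coe S.rho2 ⟨v', hv2'⟩ j) : V) = y := (hy'.trans (S.anc2_eqd hv2' j)).symm
    exact Subtype.ext (e1.trans e2.symm)
  have hd2 : S.T2.coe.dist ⟨v, hv2⟩ ⟨v', hv2'⟩ + 2*j ≤ S.lev v + S.lev v' := by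
    have b1 : S.T2.coe.dist ⟨v, hv2⟩ (anc S.T2.coe S.rho2 ⟨v, hv2⟩ j) + j ≤ S.lev v := by
      rw [S.lev_eq2 hv2]
      exact anc_dist S.T2.coe S.hc2 S.rho2 (by rw [← S.lev_eq2 hv2]; exact hj)
    have b2 : S.T2.coe.dist ⟨v', hv2'⟩ (anc S.T2.coe S.rho2 ⟨v', hv2'⟩ j) + j ≤ S.lev v' := by
      rw [S.lev_eq2 hv2']
      exact anc_dist S.T2.coe S.hc2 S.rho2 (by rw [← S.lev_eq2 hv2']; exact hj')
    have btr : S.T2.coe.dist ⟨v, hv2⟩ ⟨v', hv2'⟩ ≤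
        S.T2.coe.dist ⟨v, hv2⟩ (anc S.T2.coe S.rho2 ⟨v, hv2⟩ j) +
        S.T2.coe.dist ⟨v', hv2'⟩ (anc S.T2.coe S.rho2 ⟨v', hv2'⟩ j) := by
      rw [hanc]
      calc S.T2.coe.dist ⟨v, hv2⟩ ⟨v', hv2'⟩
          ≤ S.T2.coe.dist ⟨v, hv2⟩ (anc S.T2.coe S.rho2 ⟨v', hv2'⟩ j) +
            S.T2.coe.dist (anc S.T2.coe S.rho2 ⟨v', hv2'⟩ j) ⟨v', hv2'⟩ := S.hc2.dist_triangle
      _ = _ := by rw [SimpleGraph.dist_comm (u := anc S.T2.coe S.rho2 ⟨v', hv2'⟩ j)]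
    omega
  have htrans : S.T1.coe.dist ⟨v, hv1⟩ ⟨v', hv1'⟩ = S.T2.coe.dist ⟨v, hv2⟩ ⟨v', hv2'⟩ := by
    rw [S.hiso1, S.hiso2]
  have hd1 : S.T1.coe.dist ⟨v, hv1⟩ ⟨v', hv1'⟩ + 2*j ≤
      S.T1.coe.dist S.rho1 ⟨v, hv1⟩ + S.T1.coe.dist S.rho1 ⟨v', hv1'⟩ := by
    rw [htrans, ← S.lev_eq1 hv1, ← S.lev_eq1 hv1']
    exact hd2
  have hfin := anc_eq_of_dist S.T1.coe S.hc1 S.ha1 S.rho1 (S.T1.coe.dist ⟨v, hv1⟩ ⟨v', hv1'⟩)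
    rfl (by rw [← S.lev_eq1 hv1]; exact hj) (by rw [← S.lev_eq1 hv1']; exact hj') hd1
  rw [hx, hx', S.anc1_eqd hv1, S.anc1_eqd hv1', hfin]

lemma cpl_self {v : V} (h1 : v ∈ S.T1.verts) (h2 : v ∈ S.T2.verts) : S.cpl v v :=
  ⟨v, h1, h2, S.lev v, le_rfl, (S.anc1_top h1).symm, (S.anc2_top h2).symm⟩

lemma cpl_par {x y : V} (h : S.cpl x y) (h0 : S.lev x ≠ 0) : S.cpl (S.p1 x) (S.p2 y) := by
  obtain ⟨v, hv1, hv2, j, hj, hx, hy⟩ := h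
  have hjx : S.lev x = j := hx ▸ S.lev_anc1 hv1 hj
  have hj1 : j ≠ 0 := by omega
  obtain ⟨j', rfl⟩ : ∃ j', j = j' + 1 := ⟨j - 1, by omega⟩
  refine ⟨v, hv1, hv2, j', by omega, ?_, ?_⟩
  · rw [hx, S.p1_anc1 hv1 hj]
  · rw [hy, S.p2_anc2 hv2 hj]

end Setup
end TwoTrees
namespace TwoTrees
namespace Setup

variable {V : Type u} (S : Setup V)

def CplH (x : V) : Prop := ∃ y, S.cpl x y
def CplB (y : V) : Prop := ∃ x, S.cpl x y

open Classical in
noncomputable def phi (x : V) : V := if h : S.CplH x then h.choose else x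

open Classical in
noncomputable def psi (y : V) : V := if h : S.CplB y then h.choose else y

lemma phi_spec {x : V} (h : S.CplH x) : S.cpl x (S.phi x) := by
  rw [phi, dif_pos h]
  exact h.choose_spec

lemma psi_spec {y : V} (h : S.CplB y) : S.cpl (S.psi y) y := by
  rw [psi, dif_pos h]
  exact h.choose_spec

lemma CplH_mem {x : V} (h : S.CplH x) : x ∈ S.T1.verts := (S.cpl_mem (S.phi_spec h)).1

lemma CplB_mem {y : V} (h : S.CplB y) : y ∈ S.T2.verts := (S.cpl_mem (S.psi_spec h)).2.1

lemma phi_mem {x : V} (h : S.CplH x) : S.phi x ∈ S.T2.verts := (S.cpl_mem (S.phi_spec h)).2.1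

lemma psi_mem {y : V} (h : S.CplB y) : S.psi y ∈ S.T1.verts := (S.cpl_mem (S.psi_spec h)).1

lemma lev_phi {x : V} (h : S.CplH x) : S.lev (S.phi x) = S.lev x :=
  (S.cpl_lev (S.phi_spec h)).symm

lemma lev_psi {y : V} (h : S.CplB y) : S.lev (S.psi y) = S.lev y :=
  S.cpl_lev (S.psi_spec h)

lemma both_cpl {v : V} (h1 : v ∈ S.T1.verts) (h2 : v ∈ S.T2.verts) :
    S.CplH v ∧ S.CplB v := ⟨⟨v, S.cpl_self h1 h2⟩, ⟨v, S.cpl_self h1 h2⟩⟩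

lemma phi_self {x : V} (h : S.CplH x) (h2 : x ∈ S.T2.verts) : S.phi x = x :=
  S.cpl_matching1 (S.phi_spec h) (S.cpl_self (S.CplH_mem h) h2)

lemma psi_self {y : V} (h : S.CplB y) (h1 : y ∈ S.T1.verts) : S.psi y = y :=
  S.cpl_matching2 (S.psi_spec h) (S.cpl_self h1 (S.CplB_mem h))

lemma psi_phi {x : V} (h : S.CplH x) : S.psi (S.phi x) = x :=
  S.cpl_matching2 (S.psi_spec ⟨x, S.phi_spec h⟩) (S.phi_spec h)

lemma phi_psi {y : V} (h : S.CplB y) : S.phi (S.psi y) = y :=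
  S.cpl_matching1 (S.phi_spec ⟨y, S.psi_spec h⟩) (S.psi_spec h)

lemma CplH_par {x : V} (h : S.CplH x) (h0 : S.lev x ≠ 0) : S.CplH (S.p1 x) :=
  ⟨S.p2 (S.phi x), S.cpl_par (S.phi_spec h) h0⟩

lemma phi_par {x : V} (h : S.CplH x) (h0 : S.lev x ≠ 0) :
    S.phi (S.p1 x) = S.p2 (S.phi x) :=
  S.cpl_matching1 (S.phi_spec (S.CplH_par h h0)) (S.cpl_par (S.phi_spec h) h0)

lemma CplB_par {y : V} (h : S.CplB y) (h0 : S.lev y ≠ 0) : S.CplB (S.p2 y) :=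
  ⟨S.p1 (S.psi y), S.cpl_par (S.psi_spec h) (by rw [S.lev_psi h]; exact h0)⟩

lemma psi_par {y : V} (h : S.CplB y) (h0 : S.lev y ≠ 0) :
    S.psi (S.p2 y) = S.p1 (S.psi y) :=
  S.cpl_matching2 (S.psi_spec (S.CplB_par h h0))
    (S.cpl_par (S.psi_spec h) (by rw [S.lev_psi h]; exact h0))

lemma CplB_root {w : V} (h : S.CplB w) (h0 : S.lev w = 0) : S.CplH w := by
  obtain ⟨x, hx⟩ := h
  obtain ⟨v, hv1, hv2, j, hj, hxx, hyy⟩ := hx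
  have hr := S.r_eq ⟨v, hv1, hv2⟩
  have hw2 : w ∈ S.T2.verts := (S.cpl_mem ⟨v, hv1, hv2, j, hj, hxx, hyy⟩).2.1
  have hwr : w = S.r2 := (S.lev_zero_iff2 hw2).mp h0
  have : w ∈ S.T1.verts := by rw [hwr, ← hr.1]; exact hr.2.1
  exact (S.both_cpl this hw2).1

open Classical in
/-- the canonical representative of the couple of `w`. -/
noncomputable def headv (w : V) : V := if S.CplB w then S.psi w else w

lemma headv_of_CplH {w : V} (h : S.CplH w) : S.headv w = w := by
  rw [headv]
  split
  · rename_i hB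
    exact S.psi_self hB (S.CplH_mem h)
  · rfl

lemma headv_of_not_CplB {w : V} (h : ¬ S.CplB w) : S.headv w = w := by
  rw [headv, if_neg h]

lemma headv_of_CplB {w : V} (h : S.CplB w) : S.headv w = S.psi w := by
  rw [headv, if_pos h]

lemma lev_headv (w : V) : S.lev (S.headv w) = S.lev w := by
  rw [headv]
  split
  · rename_i hB
    exact S.lev_psi hB
  · rfl

lemma headv_CplH {w : V} (h : S.CplB w ∨ S.CplH w) : S.CplH (S.headv w) := by
  rcases h with h | h
  · rw [S.headv_of_CplB h]
    exact ⟨w, S.psi_spec h⟩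
  · rw [S.headv_of_CplH h]
    exact h

lemma phi_headv {w : V} (h : S.CplB w) : S.phi (S.headv w) = w := by
  rw [S.headv_of_CplB h]
  exact S.phi_psi h

lemma not_CplH_T1 {v : V} (hv : v ∈ S.T1.verts) (h : ¬ S.CplH v) : v ∉ S.T2.verts :=
  fun h2 => h (S.both_cpl hv h2).1

lemma not_CplB_T2 {v : V} (hv : v ∈ S.T2.verts) (h : ¬ S.CplB v) : v ∉ S.T1.verts :=
  fun h1 => h (S.both_cpl h1 hv).2

open Classical in
/-- the unique tree parent of an (uncoupled) vertex. -/
noncomputable def piv (v : V) : V := if v ∈ S.T1.verts then S.p1 v else S.p2 v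

lemma piv1 {v : V} (h : v ∈ S.T1.verts) : S.piv v = S.p1 v := by rw [piv, if_pos h]

lemma piv2 {v : V} (h : v ∉ S.T1.verts) : S.piv v = S.p2 v := by rw [piv, if_neg h]

lemma piv_spec {v : V} (h : v ∈ S.T1.verts ∨ v ∈ S.T2.verts) (h0 : S.lev v ≠ 0) :
    (S.piv v ∈ S.T1.verts ∨ S.piv v ∈ S.T2.verts) ∧ S.lev (S.piv v) + 1 = S.lev v := by
  by_cases h1 : v ∈ S.T1.verts
  · rw [S.piv1 h1]
    obtain ⟨_, hm, hl⟩ := S.p1_spec h1 h0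
    exact ⟨Or.inl hm, hl⟩
  · rw [S.piv2 h1]
    have h2 : v ∈ S.T2.verts := h.resolve_left h1
    obtain ⟨_, hm, hl⟩ := S.p2_spec h2 h0
    exact ⟨Or.inr hm, hl⟩

end Setup
end TwoTrees
namespace TwoTrees
namespace Setup

variable {V : Type u} (S : Setup V) {n : ℕ}

def code (e : V ≃ Fin n) (v : V) (i : ℕ) : ℕ := 2 * (e v : ℕ) + i + 1

open Classical in
/-- bag of the main node of `v`. -/
noncomputable def nbag0 (v : V) : Set V :=
  if S.CplH v then (if S.lev v = 0 then {v} else {v, S.p2 (S.phi v), S.phi v})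
  else if S.CplB v then ∅
  else if v ∈ S.T1.verts ∨ v ∈ S.T2.verts then (if S.lev v = 0 then {v} else {v, S.piv v})
  else {v}

open Classical in
/-- bag of the secondary node of `v`. -/
noncomputable def nbag1 (v : V) : Set V :=
  if S.CplH v ∧ S.lev v ≠ 0 then {S.p1 v, S.p2 (S.phi v), v} else ∅

open Classical in
noncomputable def npar0 (e : V ≃ Fin n) (v : V) : ℕ :=
  if S.CplH v then (if S.lev v = 0 then 0 else code e v 1)
  else if S.CplB v then 0
  else if v ∈ S.T1.verts ∨ v ∈ S.T2.verts then
    (if S.lev v = 0 then 0 else code e (S.headv (S.piv v)) 0)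
  else 0

open Classical in
noncomputable def npar1 (e : V ≃ Fin n) (v : V) : ℕ :=
  if S.CplH v ∧ S.lev v ≠ 0 then code e (S.p1 v) 0 else 0

def vdec (e : V ≃ Fin n) (hn : 0 < n) (c : ℕ) : V :=
  e.symm ⟨(c-1)/2 % n, Nat.mod_lt _ hn⟩

open Classical in
noncomputable def bagf (e : V ≃ Fin n) (hn : 0 < n) (c : ℕ) : Set V :=
  if 1 ≤ c ∧ c ≤ 2*n then
    (if (c-1) % 2 = 0 then S.nbag0 (vdec e hn c) else S.nbag1 (vdec e hn c))
  else ∅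

open Classical in
noncomputable def parf (e : V ≃ Fin n) (hn : 0 < n) (c : ℕ) : ℕ :=
  if 1 ≤ c ∧ c ≤ 2*n then
    (if (c-1) % 2 = 0 then S.npar0 e (vdec e hn c) else S.npar1 e (vdec e hn c))
  else 0

open Classical in
noncomputable def rkf (e : V ≃ Fin n) (hn : 0 < n) (c : ℕ) : ℕ :=
  if 1 ≤ c ∧ c ≤ 2*n then
    (if (c-1) % 2 = 0 then 2 * S.lev (vdec e hn c) + 2 else 2 * S.lev (vdec e hn c) + 1)
  else (if c = 0 then 0 else 1)

section Decode
variable (e : V ≃ Fin n) (hn : 0 < n)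

lemma code_cond (v : V) {i : ℕ} (hi : i ≤ 1) : 1 ≤ code e v i ∧ code e v i ≤ 2*n := by
  have := (e v).isLt
  unfold code
  omega

lemma vdec_code (v : V) {i : ℕ} (hi : i ≤ 1) : vdec e hn (code e v i) = v := by
  have hlt := (e v).isLt
  have h0 : (code e v i - 1)/2 = (e v : ℕ) := by unfold code; omega
  have h1 : (code e v i - 1)/2 % n = (e v : ℕ) := by
    rw [h0]; exact Nat.mod_eq_of_lt hlt
  have h2 : (⟨(code e v i - 1)/2 % n, Nat.mod_lt _ hn⟩ : Fin n) = e v := Fin.ext h1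
  rw [vdec, h2, Equiv.symm_apply_apply]

lemma mod_code (v : V) {i : ℕ} (hi : i ≤ 1) : (code e v i - 1) % 2 = i := by
  unfold code; omega

lemma code_ne_zero (v : V) (i : ℕ) : code e v i ≠ 0 := by unfold code; omega

lemma code_inj {v w : V} {i j : ℕ} (hi : i ≤ 1) (hj : j ≤ 1)
    (h : code e v i = code e w j) : v = w ∧ i = j := by
  have h1 : (e v : ℕ) = (e w : ℕ) ∧ i = j := by unfold code at h; omega
  refine ⟨?_, h1.2⟩
  have := Fin.ext h1.1 (a := e v) (b := e w)
  have h3 := congrArg e.symm this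
  simpa using h3

lemma bagf_code0 (v : V) : S.bagf e hn (code e v 0) = S.nbag0 v := by
  rw [bagf, if_pos (code_cond e v (by omega)), if_pos (mod_code e v (by omega)),
    vdec_code e hn v (by omega)]

lemma bagf_code1 (v : V) : S.bagf e hn (code e v 1) = S.nbag1 v := by
  rw [bagf, if_pos (code_cond e v (by omega))]
  rw [if_neg (by rw [mod_code e v (by omega)]; omega), vdec_code e hn v (by omega)]

lemma parf_code0 (v : V) : S.parf e hn (code e v 0) = S.npar0 e v := by
  rw [parf, if_pos (code_cond e v (by omega)), if_pos (mod_code e v (by omega)),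
    vdec_code e hn v (by omega)]

lemma parf_code1 (v : V) : S.parf e hn (code e v 1) = S.npar1 e v := by
  rw [parf, if_pos (code_cond e v (by omega))]
  rw [if_neg (by rw [mod_code e v (by omega)]; omega), vdec_code e hn v (by omega)]

lemma rkf_code0 (v : V) : S.rkf e hn (code e v 0) = 2 * S.lev v + 2 := by
  rw [rkf, if_pos (code_cond e v (by omega)), if_pos (mod_code e v (by omega)),
    vdec_code e hn v (by omega)]

lemma rkf_code1 (v : V) : S.rkf e hn (code e v 1) = 2 * S.lev v + 1 := by
  rw [rkf, if_pos (code_cond e v (by omega))]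
  rw [if_neg (by rw [mod_code e v (by omega)]; omega), vdec_code e hn v (by omega)]

lemma bagf_zero : S.bagf e hn 0 = ∅ := by rw [bagf, if_neg (by omega)]
lemma parf_zero : S.parf e hn 0 = 0 := by rw [parf, if_neg (by omega)]
lemma rkf_zero : S.rkf e hn 0 = 0 := by rw [rkf, if_neg (by omega), if_pos rfl]

lemma bagf_junk {c : ℕ} (hc : 2*n < c) : S.bagf e hn c = ∅ := by
  rw [bagf, if_neg (by omega)]
lemma parf_junk {c : ℕ} (hc : 2*n < c) : S.parf e hn c = 0 := by
  rw [parf, if_neg (by omega)]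
lemma rkf_junk {c : ℕ} (hc : 2*n < c) : S.rkf e hn c = 1 := by
  rw [rkf, if_neg (by omega), if_neg (by omega)]

include hn in
/-- every code is the root, a main node, a secondary node, or junk. -/
lemma code_cases (c : ℕ) :
    c = 0 ∨ (∃ v, c = code e v 0) ∨ (∃ v, c = code e v 1) ∨ 2*n < c := by
  by_cases h : 1 ≤ c ∧ c ≤ 2*n
  · have hlt : (c-1)/2 < n := by omega
    have hev : (e (vdec e hn c) : ℕ) = (c-1)/2 := by
      rw [vdec, Equiv.apply_symm_apply]
      exact Nat.mod_eq_of_lt hlt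
    rcases Nat.mod_two_eq_zero_or_one (c-1) with h2 | h2
    · refine Or.inr (Or.inl ⟨vdec e hn c, ?_⟩)
      unfold code
      omega
    · refine Or.inr (Or.inr (Or.inl ⟨vdec e hn c, ?_⟩))
      unfold code
      omega
  · rcases Nat.eq_zero_or_pos c with rfl | hc
    · exact Or.inl rfl
    · exact Or.inr (Or.inr (Or.inr (by omega)))

end Decode
end Setup
end TwoTrees
namespace TwoTrees
namespace Setup

variable {V : Type u} (S : Setup V) {n : ℕ} (e : V ≃ Fin n) (hn : 0 < n)

/-! ### unfold lemmas for node data -/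

lemma nbag0_cplH0 {v : V} (h : S.CplH v) (h0 : S.lev v = 0) : S.nbag0 v = {v} := by
  rw [nbag0, if_pos h, if_pos h0]

lemma nbag0_cplH {v : V} (h : S.CplH v) (h0 : S.lev v ≠ 0) :
    S.nbag0 v = {v, S.p2 (S.phi v), S.phi v} := by
  rw [nbag0, if_pos h, if_neg h0]

lemma nbag0_cplB {v : V} (h : ¬ S.CplH v) (hb : S.CplB v) : S.nbag0 v = ∅ := by
  rw [nbag0, if_neg h, if_pos hb]

lemma nbag0_tree0 {v : V} (h : ¬ S.CplH v) (hb : ¬ S.CplB v)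
    (ht : v ∈ S.T1.verts ∨ v ∈ S.T2.verts) (h0 : S.lev v = 0) : S.nbag0 v = {v} := by
  rw [nbag0, if_neg h, if_neg hb, if_pos ht, if_pos h0]

lemma nbag0_tree {v : V} (h : ¬ S.CplH v) (hb : ¬ S.CplB v)
    (ht : v ∈ S.T1.verts ∨ v ∈ S.T2.verts) (h0 : S.lev v ≠ 0) :
    S.nbag0 v = {v, S.piv v} := by
  rw [nbag0, if_neg h, if_neg hb, if_pos ht, if_neg h0]

lemma nbag0_iso {v : V} (h : ¬ S.CplH v) (hb : ¬ S.CplB v)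
    (ht : ¬ (v ∈ S.T1.verts ∨ v ∈ S.T2.verts)) : S.nbag0 v = {v} := by
  rw [nbag0, if_neg h, if_neg hb, if_neg ht]

lemma nbag1_cplH {v : V} (h : S.CplH v) (h0 : S.lev v ≠ 0) :
    S.nbag1 v = {S.p1 v, S.p2 (S.phi v), v} := by
  rw [nbag1, if_pos ⟨h, h0⟩]

lemma nbag1_not {v : V} (h : ¬ (S.CplH v ∧ S.lev v ≠ 0)) : S.nbag1 v = ∅ := by
  rw [nbag1, if_neg h]

lemma npar0_cplH0 {v : V} (h : S.CplH v) (h0 : S.lev v = 0) : S.npar0 e v = 0 := by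
  rw [npar0, if_pos h, if_pos h0]

lemma npar0_cplH {v : V} (h : S.CplH v) (h0 : S.lev v ≠ 0) :
    S.npar0 e v = code e v 1 := by
  rw [npar0, if_pos h, if_neg h0]

lemma npar0_cplB {v : V} (h : ¬ S.CplH v) (hb : S.CplB v) : S.npar0 e v = 0 := by
  rw [npar0, if_neg h, if_pos hb]

lemma npar0_tree0 {v : V} (h : ¬ S.CplH v) (hb : ¬ S.CplB v)
    (ht : v ∈ S.T1.verts ∨ v ∈ S.T2.verts) (h0 : S.lev v = 0) : S.npar0 e v = 0 := by
  rw [npar0, if_neg h, if_neg hb, if_pos ht, if_pos h0]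

lemma npar0_tree {v : V} (h : ¬ S.CplH v) (hb : ¬ S.CplB v)
    (ht : v ∈ S.T1.verts ∨ v ∈ S.T2.verts) (h0 : S.lev v ≠ 0) :
    S.npar0 e v = code e (S.headv (S.piv v)) 0 := by
  rw [npar0, if_neg h, if_neg hb, if_pos ht, if_neg h0]

lemma npar0_iso {v : V} (h : ¬ S.CplH v) (hb : ¬ S.CplB v)
    (ht : ¬ (v ∈ S.T1.verts ∨ v ∈ S.T2.verts)) : S.npar0 e v = 0 := by
  rw [npar0, if_neg h, if_neg hb, if_neg ht]

lemma npar1_cplH {v : V} (h : S.CplH v) (h0 : S.lev v ≠ 0) :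
    S.npar1 e v = code e (S.p1 v) 0 := by
  rw [npar1, if_pos ⟨h, h0⟩]

lemma npar1_not {v : V} (h : ¬ (S.CplH v ∧ S.lev v ≠ 0)) : S.npar1 e v = 0 := by
  rw [npar1, if_neg h]

/-! ### the rank condition -/

lemma lev_p1 {v : V} (h : v ∈ S.T1.verts) (h0 : S.lev v ≠ 0) :
    S.lev (S.p1 v) + 1 = S.lev v := (S.p1_spec h h0).2.2

lemma lev_p2 {v : V} (h : v ∈ S.T2.verts) (h0 : S.lev v ≠ 0) :
    S.lev (S.p2 v) + 1 = S.lev v := (S.p2_spec h h0).2.2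

include hn in
lemma rank_decrease : ∀ c, c ≠ 0 → S.rkf e hn (S.parf e hn c) < S.rkf e hn c := by
  intro c hc
  rcases code_cases e hn c with rfl | ⟨v, rfl⟩ | ⟨v, rfl⟩ | hjunk
  · exact absurd rfl hc
  · rw [S.parf_code0 e hn v, S.rkf_code0 e hn v]
    by_cases hH : S.CplH v
    · by_cases h0 : S.lev v = 0
      · rw [S.npar0_cplH0 e hH h0, S.rkf_zero]
        omega
      · rw [S.npar0_cplH e hH h0, S.rkf_code1]
        omega
    · by_cases hB : S.CplB v
      · rw [S.npar0_cplB e hH hB, S.rkf_zero]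
        omega
      · by_cases ht : v ∈ S.T1.verts ∨ v ∈ S.T2.verts
        · by_cases h0 : S.lev v = 0
          · rw [S.npar0_tree0 e hH hB ht h0, S.rkf_zero]
            omega
          · rw [S.npar0_tree e hH hB ht h0, S.rkf_code0]
            have h1 := (S.piv_spec ht h0).2
            have h2 := S.lev_headv (S.piv v)
            omega
        · rw [S.npar0_iso e hH hB ht, S.rkf_zero]
          omega
  · rw [S.parf_code1 e hn v, S.rkf_code1 e hn v]
    by_cases hH : S.CplH v ∧ S.lev v ≠ 0
    · rw [S.npar1_cplH e hH.1 hH.2, S.rkf_code0]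
      have h1 := S.lev_p1 (S.CplH_mem hH.1) hH.2
      omega
    · rw [S.npar1_not e hH, S.rkf_zero]
      omega
  · rw [S.parf_junk e hn hjunk, S.rkf_zero, S.rkf_junk e hn hjunk]
    omega

include hn in
lemma decomp_tree : (PGraph (S.parf e hn)).IsTree :=
  pgraph_isTree (S.parf_zero e hn) (S.rank_decrease e hn)

/-! ### bag sizes -/

include hn in
lemma bag_small : ∀ c, (S.bagf e hn c).encard ≤ 3 := by
  have hsing : ∀ v : V, ({v} : Set V).encard ≤ 3 := by
    intro v; rw [Set.encard_singleton]; norm_num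
  have hpair : ∀ v w : V, ({v, w} : Set V).encard ≤ 3 := by
    intro v w
    calc ({v, w} : Set V).encard ≤ ({w} : Set V).encard + 1 := Set.encard_insert_le _ _
    _ ≤ 2 := by rw [Set.encard_singleton]; norm_num
    _ ≤ 3 := by norm_num
  have htrip : ∀ v w x : V, ({v, w, x} : Set V).encard ≤ 3 := by
    intro v w x
    calc ({v, w, x} : Set V).encard ≤ ({w, x} : Set V).encard + 1 := Set.encard_insert_le _ _
    _ ≤ ({x} : Set V).encard + 1 + 1 := by
        gcongr
        exact Set.encard_insert_le _ _
    _ ≤ 3 := by rw [Set.encard_singleton]; norm_num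
  intro c
  rcases code_cases e hn c with rfl | ⟨v, rfl⟩ | ⟨v, rfl⟩ | hjunk
  · rw [S.bagf_zero e hn]; simp
  · rw [S.bagf_code0 e hn v]
    by_cases hH : S.CplH v
    · by_cases h0 : S.lev v = 0
      · rw [S.nbag0_cplH0 hH h0]; exact hsing v
      · rw [S.nbag0_cplH hH h0]; exact htrip _ _ _
    · by_cases hB : S.CplB v
      · rw [S.nbag0_cplB hH hB]; simp
      · by_cases ht : v ∈ S.T1.verts ∨ v ∈ S.T2.verts
        · by_cases h0 : S.lev v = 0
          · rw [S.nbag0_tree0 hH hB ht h0]; exact hsing v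
          · rw [S.nbag0_tree hH hB ht h0]; exact hpair _ _
        · rw [S.nbag0_iso hH hB ht]; exact hsing v
  · rw [S.bagf_code1 e hn v]
    by_cases hH : S.CplH v ∧ S.lev v ≠ 0
    · rw [S.nbag1_cplH hH.1 hH.2]; exact htrip _ _ _
    · rw [S.nbag1_not hH]; simp
  · rw [S.bagf_junk e hn hjunk]; simp

/-! ### vertex coverage : every vertex lies in the bag of its hub node. -/

lemma hub_mem (w : V) : w ∈ S.bagf e hn (code e (S.headv w) 0) := by
  rw [S.bagf_code0 e hn]
  by_cases hB : S.CplB w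
  · rw [S.headv_of_CplB hB]
    have hH : S.CplH (S.psi w) := ⟨w, S.psi_spec hB⟩
    by_cases h0 : S.lev (S.psi w) = 0
    · have hw0 : S.lev w = 0 := by rw [← S.lev_psi hB]; exact h0
      have hHw : S.CplH w := S.CplB_root hB hw0
      have : S.psi w = w := S.psi_self hB (S.CplH_mem hHw)
      rw [this] at h0 ⊢
      rw [S.nbag0_cplH0 hHw h0]
      exact rfl
    · rw [S.nbag0_cplH hH h0, S.phi_psi hB]
      right; right; rfl
  · rw [S.headv_of_not_CplB hB]
    by_cases hH : S.CplH w
    · by_cases h0 : S.lev w = 0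
      · rw [S.nbag0_cplH0 hH h0]; rfl
      · rw [S.nbag0_cplH hH h0]; left; rfl
    · by_cases ht : w ∈ S.T1.verts ∨ w ∈ S.T2.verts
      · by_cases h0 : S.lev w = 0
        · rw [S.nbag0_tree0 hH hB ht h0]; rfl
        · rw [S.nbag0_tree hH hB ht h0]; left; rfl
      · rw [S.nbag0_iso hH hB ht]; rfl

/-! ### edge coverage -/

include hn in
lemma edge_cover {u v : V} (h : S.G.Adj u v) :
    ∃ c, u ∈ S.bagf e hn c ∧ v ∈ S.bagf e hn c := by
  -- reduce to : w deeper endpoint of a tree edge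
  have main1 : ∀ {a b : V}, S.T1.Adj a b → S.lev a + 1 = S.lev b → S.p1 b = a →
      ∃ c, a ∈ S.bagf e hn c ∧ b ∈ S.bagf e hn c := by
    intro a b hadj hlev hp
    have hb1 : b ∈ S.T1.verts := S.T1.edge_vert hadj.symm
    have h0 : S.lev b ≠ 0 := by omega
    by_cases hH : S.CplH b
    · refine ⟨code e b 1, ?_, ?_⟩
      · rw [S.bagf_code1 e hn, S.nbag1_cplH hH h0, ← hp]
        left; rfl
      · rw [S.bagf_code1 e hn, S.nbag1_cplH hH h0]
        right; right; rfl
    · have hB : ¬ S.CplB b := by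
        intro hB
        exact hH (S.both_cpl hb1 (S.CplB_mem hB)).1
      refine ⟨code e b 0, ?_, ?_⟩
      · rw [S.bagf_code0 e hn, S.nbag0_tree hH hB (Or.inl hb1) h0, S.piv1 hb1, ← hp]
        right; rfl
      · rw [S.bagf_code0 e hn, S.nbag0_tree hH hB (Or.inl hb1) h0]
        left; rfl
  have main2 : ∀ {a b : V}, S.T2.Adj a b → S.lev a + 1 = S.lev b → S.p2 b = a →
      ∃ c, a ∈ S.bagf e hn c ∧ b ∈ S.bagf e hn c := by
    intro a b hadj hlev hp
    have hb2 : b ∈ S.T2.verts := S.T2.edge_vert hadj.symm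
    have h0 : S.lev b ≠ 0 := by omega
    by_cases hB : S.CplB b
    · have hH : S.CplH (S.psi b) := ⟨b, S.psi_spec hB⟩
      have h0' : S.lev (S.psi b) ≠ 0 := by rw [S.lev_psi hB]; exact h0
      refine ⟨code e (S.psi b) 0, ?_, ?_⟩
      · rw [S.bagf_code0 e hn, S.nbag0_cplH hH h0', S.phi_psi hB, ← hp]
        right; left; rfl
      · rw [S.bagf_code0 e hn, S.nbag0_cplH hH h0', S.phi_psi hB]
        right; right; rfl
    · have hH : ¬ S.CplH b := by
        intro hH
        exact hB (S.both_cpl (S.CplH_mem hH) hb2).2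
      have hb1 : b ∉ S.T1.verts := fun h1 => hB (S.both_cpl h1 hb2).2
      refine ⟨code e b 0, ?_, ?_⟩
      · rw [S.bagf_code0 e hn, S.nbag0_tree hH hB (Or.inr hb2) h0, S.piv2 hb1, ← hp]
        right; rfl
      · rw [S.bagf_code0 e hn, S.nbag0_tree hH hB (Or.inr hb2) h0]
        left; rfl
  rcases S.hcov h with hadj | hadj
  · rcases S.edge1 hadj with ⟨hlev, hp⟩ | ⟨hlev, hp⟩
    · exact main1 hadj hlev hp
    · obtain ⟨c, h1, h2⟩ := main1 hadj.symm hlev hp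
      exact ⟨c, h2, h1⟩
  · rcases S.edge2 hadj with ⟨hlev, hp⟩ | ⟨hlev, hp⟩
    · exact main2 hadj hlev hp
    · obtain ⟨c, h1, h2⟩ := main2 hadj.symm hlev hp
      exact ⟨c, h2, h1⟩

end Setup
end TwoTrees
namespace TwoTrees
namespace Setup

variable {V : Type u} (S : Setup V) {n : ℕ} (e : V ≃ Fin n) (hn : 0 < n)

include hn in
lemma trace_connected (w : V) :
    ((PGraph (S.parf e hn)).induce {c | w ∈ S.bagf e hn c}).Connected := by
  have hhub : code e (S.headv w) 0 ∈ {c | w ∈ S.bagf e hn c} := S.hub_mem e hn w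
  have hadjpar : ∀ c : ℕ, c ≠ 0 → (PGraph (S.parf e hn)).Adj c (S.parf e hn c) :=
    fun c hc => adj_par (S.rank_decrease e hn) hc
  have step : ∀ {a b : ℕ} (ha : a ∈ {c | w ∈ S.bagf e hn c}) (hb : b ∈ {c | w ∈ S.bagf e hn c}),
      (PGraph (S.parf e hn)).Adj a b →
      ((PGraph (S.parf e hn)).induce {c | w ∈ S.bagf e hn c}).Reachable ⟨a, ha⟩ ⟨b, hb⟩ := by
    intro a b ha hb h
    exact SimpleGraph.Adj.reachable (by exact h)
  have go0 : ∀ {a : ℕ} (ha : a ∈ {c | w ∈ S.bagf e hn c}),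
      a = code e (S.headv w) 0 →
      ((PGraph (S.parf e hn)).induce {c | w ∈ S.bagf e hn c}).Reachable ⟨a, ha⟩
        ⟨code e (S.headv w) 0, hhub⟩ := by
    intro a ha hEq
    subst hEq
    rfl
  have go1 : ∀ {a b : ℕ} (ha : a ∈ {c | w ∈ S.bagf e hn c}),
      (PGraph (S.parf e hn)).Adj a b → b = code e (S.headv w) 0 →
      ((PGraph (S.parf e hn)).induce {c | w ∈ S.bagf e hn c}).Reachable ⟨a, ha⟩
        ⟨code e (S.headv w) 0, hhub⟩ := by
    intro a b ha hadj hEq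
    subst hEq
    exact step ha hhub hadj
  have go2 : ∀ {a m b : ℕ} (ha : a ∈ {c | w ∈ S.bagf e hn c})
      (hm : m ∈ {c | w ∈ S.bagf e hn c}),
      (PGraph (S.parf e hn)).Adj a m → (PGraph (S.parf e hn)).Adj m b →
      b = code e (S.headv w) 0 →
      ((PGraph (S.parf e hn)).induce {c | w ∈ S.bagf e hn c}).Reachable ⟨a, ha⟩
        ⟨code e (S.headv w) 0, hhub⟩ := by
    intro a m b ha hm h1 h2 hEq
    exact (step ha hm h1).trans (go1 hm h2 hEq)
  have reach : ∀ (c : ℕ) (hc : c ∈ {c | w ∈ S.bagf e hn c}),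
      ((PGraph (S.parf e hn)).induce {c | w ∈ S.bagf e hn c}).Reachable ⟨c, hc⟩
        ⟨code e (S.headv w) 0, hhub⟩ := by
    intro c hc
    have hcw : w ∈ S.bagf e hn c := hc
    rcases code_cases e hn c with hc0 | ⟨v, hcv⟩ | ⟨v, hcv⟩ | hjunk
    · subst hc0
      rw [S.bagf_zero e hn] at hcw
      exact absurd hcw (Set.notMem_empty w)
    · subst hcv
      rw [S.bagf_code0 e hn] at hcw
      by_cases hH : S.CplH v
      · by_cases h0 : S.lev v = 0
        · rw [S.nbag0_cplH0 hH h0] at hcw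
          have hwv : w = v := hcw
          refine go0 hc ?_
          rw [hwv, S.headv_of_CplH hH]
        · rw [S.nbag0_cplH hH h0] at hcw
          simp only [Set.mem_insert_iff, Set.mem_singleton_iff] at hcw
          rcases hcw with h | h | h
          · refine go0 hc ?_
            rw [h, S.headv_of_CplH hH]
          · -- w = p2 (phi v) : two steps through the secondary node
            have hcp : S.cpl (S.p1 v) w := by
              rw [h]; exact S.cpl_par (S.phi_spec hH) h0
            have hBw : S.CplB w := ⟨_, hcp⟩
            have hpsiw : S.psi w = S.p1 v := S.cpl_matching2 (S.psi_spec hBw) hcp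
            have hhead : S.headv w = S.p1 v := by rw [S.headv_of_CplB hBw, hpsiw]
            have hmid : code e v 1 ∈ {c | w ∈ S.bagf e hn c} := by
              show w ∈ S.bagf e hn (code e v 1)
              rw [S.bagf_code1 e hn, S.nbag1_cplH hH h0]
              simp only [Set.mem_insert_iff, Set.mem_singleton_iff]
              exact Or.inr (Or.inl h)
            have adj1 : (PGraph (S.parf e hn)).Adj (code e v 0) (code e v 1) := by
              have := hadjpar (code e v 0) (code_ne_zero e v 0)
              rwa [S.parf_code0 e hn, S.npar0_cplH e hH h0] at this
            have adj2 : (PGraph (S.parf e hn)).Adj (code e v 1) (code e (S.p1 v) 0) := by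
              have := hadjpar (code e v 1) (code_ne_zero e v 1)
              rwa [S.parf_code1 e hn, S.npar1_cplH e hH h0] at this
            exact go2 hc hmid adj1 adj2 (by rw [hhead])
          · -- w = phi v
            have hcp : S.cpl v w := by rw [h]; exact S.phi_spec hH
            have hBw : S.CplB w := ⟨_, hcp⟩
            have hpsiw : S.psi w = v := S.cpl_matching2 (S.psi_spec hBw) hcp
            refine go0 hc ?_
            rw [S.headv_of_CplB hBw, hpsiw]
      · by_cases hB : S.CplB v
        · rw [S.nbag0_cplB hH hB] at hcw
          exact absurd hcw (Set.notMem_empty w)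
        · by_cases ht : v ∈ S.T1.verts ∨ v ∈ S.T2.verts
          · by_cases h0 : S.lev v = 0
            · rw [S.nbag0_tree0 hH hB ht h0] at hcw
              have hwv : w = v := hcw
              refine go0 hc ?_
              rw [hwv, S.headv_of_not_CplB hB]
            · rw [S.nbag0_tree hH hB ht h0] at hcw
              simp only [Set.mem_insert_iff, Set.mem_singleton_iff] at hcw
              rcases hcw with h | h
              · refine go0 hc ?_
                rw [h, S.headv_of_not_CplB hB]
              · have adj1 : (PGraph (S.parf e hn)).Adj (code e v 0)
                    (code e (S.headv (S.piv v)) 0) := by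
                  have := hadjpar (code e v 0) (code_ne_zero e v 0)
                  rwa [S.parf_code0 e hn, S.npar0_tree e hH hB ht h0] at this
                refine go1 hc adj1 ?_
                rw [h]
          · rw [S.nbag0_iso hH hB ht] at hcw
            have hwv : w = v := hcw
            have hBv : ¬ S.CplB v := fun hB => ht (Or.inr (S.CplB_mem hB))
            refine go0 hc ?_
            rw [hwv, S.headv_of_not_CplB hBv]
    · subst hcv
      rw [S.bagf_code1 e hn] at hcw
      by_cases hH : S.CplH v ∧ S.lev v ≠ 0
      · rw [S.nbag1_cplH hH.1 hH.2] at hcw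
        simp only [Set.mem_insert_iff, Set.mem_singleton_iff] at hcw
        have adj2 : (PGraph (S.parf e hn)).Adj (code e v 1) (code e (S.p1 v) 0) := by
          have := hadjpar (code e v 1) (code_ne_zero e v 1)
          rwa [S.parf_code1 e hn, S.npar1_cplH e hH.1 hH.2] at this
        rcases hcw with h | h | h
        · -- w = p1 v
          have hHw : S.CplH w := by rw [h]; exact S.CplH_par hH.1 hH.2
          refine go1 hc adj2 ?_
          rw [S.headv_of_CplH hHw, h]
        · -- w = p2 (phi v)
          have hcp : S.cpl (S.p1 v) w := by
            rw [h]; exact S.cpl_par (S.phi_spec hH.1) hH.2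
          have hBw : S.CplB w := ⟨_, hcp⟩
          have hpsiw : S.psi w = S.p1 v := S.cpl_matching2 (S.psi_spec hBw) hcp
          refine go1 hc adj2 ?_
          rw [S.headv_of_CplB hBw, hpsiw]
        · -- w = v
          have adj1 : (PGraph (S.parf e hn)).Adj (code e v 0) (code e v 1) := by
            have := hadjpar (code e v 0) (code_ne_zero e v 0)
            rwa [S.parf_code0 e hn, S.npar0_cplH e hH.1 hH.2] at this
          refine go1 hc adj1.symm ?_
          rw [h, S.headv_of_CplH (h ▸ hH.1)]
      · rw [S.nbag1_not hH] at hcw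
        exact absurd hcw (Set.notMem_empty w)
    · rw [S.bagf_junk e hn hjunk] at hcw
      exact absurd hcw (Set.notMem_empty w)
  rw [connected_iff]
  refine ⟨?_, ⟨⟨code e (S.headv w) 0, hhub⟩⟩⟩
  intro a b
  exact (reach a.1 a.2).trans (reach b.1 b.2).symm

end Setup
end TwoTrees
/-- A tree-decomposition of `G`. -/
def IsTreeDecomp {V : Type*} {ι : Type} (G : SimpleGraph V) (T : SimpleGraph ι)
    (bag : ι → Set V) : Prop :=
  T.IsTree ∧
  (∀ v : V, ∃ i, v ∈ bag i) ∧
  (∀ ⦃u v : V⦄, G.Adj u v → ∃ i, u ∈ bag i ∧ v ∈ bag i) ∧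
  (∀ v : V, (T.induce {i | v ∈ bag i}).Connected)

/-- The treewidth of `G`. -/
noncomputable def treewidth {V : Type*} (G : SimpleGraph V) : ℕ∞ :=
  sInf {w : ℕ∞ | ∃ (ι : Type) (T : SimpleGraph ι) (bag : ι → Set V),
    IsTreeDecomp G T bag ∧ ∀ i, (bag i).encard ≤ w + 1}

/-- Every graph whose edge set can be covered by two isometric subtrees has
treewidth at most `2` (in particular so does every such `2`-connected graph). -/
theorem treewidth_le_two_of_two_isometric_trees {V : Type*} [Finite V]
    (G : SimpleGraph V) (T₁ T₂ : G.Subgraph)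
    (h₁ : T₁.coe.IsTree) (h₂ : T₂.coe.IsTree)
    (hiso₁ : ∀ x y : T₁.verts, T₁.coe.dist x y = G.dist x y)
    (hiso₂ : ∀ x y : T₂.verts, T₂.coe.dist x y = G.dist x y)
    (hcov : ∀ ⦃u v : V⦄, G.Adj u v → T₁.Adj u v ∨ T₂.Adj u v) :
    treewidth G ≤ 2 := by
  classical
  let S : TwoTrees.Setup V := ⟨G, T₁, T₂, h₁, h₂, hiso₁, hiso₂, hcov⟩
  haveI : Fintype V := Fintype.ofFinite V
  have hne : Nonempty V := ⟨(Classical.choice S.hc1.nonempty : S.T1.verts).1⟩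
  have hn : 0 < Fintype.card V := Fintype.card_pos_iff.mpr hne
  let e : V ≃ Fin (Fintype.card V) := Fintype.equivFin V
  rw [treewidth]
  apply sInf_le
  refine ⟨ℕ, TwoTrees.PGraph (S.parf e hn), S.bagf e hn, ⟨?_, ?_, ?_, ?_⟩, ?_⟩
  · exact S.decomp_tree e hn
  · intro v
    exact ⟨TwoTrees.Setup.code e (S.headv v) 0, S.hub_mem e hn v⟩
  · intro u v h
    exact S.edge_cover e hn h
  · intro v
    exact S.trace_connected e hn v
  · intro i
    calc (S.bagf e hn i).encard ≤ 3 := S.bag_small e hn i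
    _ = 2 + 1 := by norm_num
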